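/- Let k be a field and n a natural number. If M is an n×n matrix over k satisfying M² = M (i.e. M is idempotent), then M is similar to the diagonal matrix whose first r diagonal entries are 1 and whose remaining diagonal entries are 0, where r is the rank of M. That is, there exists an invertible n×n matrix P over k such that P * M * P⁻¹ is the diagonal matrix A_r := diagonal(fun i => if (i : ℕ) < r then 1 else 0) with r = rank M. -/

import Mathlib

open Matrix

theorem idempotent_similar_to_rank_diagonal
    (k : Type*) [Field k] (n : ℕ) (M : Matrix (Fin n) (Fin n) k)
    (hM : M * M = M) :
    ∃ P : GL (Fin n) k,
      (P : Matrix (Fin n) (Fin n) k) * M * ((P⁻¹ : GL (Fin n) k) : Matrix (Fin n) (Fin n) k)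
        = Matrix.diagonal (fun i : Fin n => if (i : ℕ) < M.rank then (1 : k) else 0) := by
  classical
  set f : (Fin n → k) →ₗ[k] (Fin n → k) := M.mulVecLin with hfdef
  have hff : f ∘ₗ f = f := by
    rw [hfdef, ← Matrix.mulVecLin_mul, hM]
  set p := LinearMap.range f with hp
  set q := LinearMap.ker f with hq
  have hproj : ∀ x : p, f.rangeRestrict (x : Fin n → k) = x := by
    rintro ⟨x, hx⟩
    obtain ⟨y, rfl⟩ := hx
    apply Subtype.ext
    simpa using LinearMap.congr_fun hff y
  have hc : IsCompl p q := by
    have := LinearMap.isCompl_of_proj hproj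
    rwa [LinearMap.ker_rangeRestrict] at this
  set r := M.rank with hr
  have hrp : Module.finrank k p = r := rfl
  have hrq : Module.finrank k q = n - r := by
    have h1 : Module.finrank k p + Module.finrank k q = n := by
      have := LinearMap.finrank_range_add_finrank_ker f
      simpa [Module.finrank_fin_fun] using this
    omega
  have hrn : r ≤ n := by
    have := M.rank_le_card_height
    simpa using this
  have hsum : r + (n - r) = n := by omega
  -- basis of p and q
  let br : Module.Basis (Fin r) k p := (Module.finBasis k p).reindex (finCongr hrp)
  let bq : Module.Basis (Fin (n - r)) k q := (Module.finBasis k q).reindex (finCongr hrq)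
  let b0 : Module.Basis (Fin r ⊕ Fin (n - r)) k (Fin n → k) :=
    (br.prod bq).map (Submodule.prodEquivOfIsCompl p q hc)
  let b : Module.Basis (Fin n) k (Fin n → k) :=
    b0.reindex ((finSumFinEquiv.trans (finCongr hsum)))
  -- key property
  have hb0l : ∀ j : Fin r ⊕ Fin (n - r), (Sum.isLeft j = true → b0 j ∈ p) ∧
      (Sum.isLeft j = false → b0 j ∈ q) := by
    rintro (j | j)
    · refine ⟨fun _ => ?_, by simp⟩
      simp only [b0, Module.Basis.map_apply, Module.Basis.prod_apply, Sum.elim_inl]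
      change ((br j : Fin n → k) + ((0 : q) : Fin n → k)) ∈ p
      simp
    · refine ⟨by simp, fun _ => ?_⟩
      simp only [b0, Module.Basis.map_apply, Module.Basis.prod_apply, Sum.elim_inr]
      change (((0 : p) : Fin n → k) + (bq j : Fin n → k)) ∈ q
      simp
  have hfb : ∀ i : Fin n, f (b i) = (if (i : ℕ) < r then (1 : k) else 0) • b i := by
    intro i
    have hbi : b i = b0 (finSumFinEquiv.symm (finCongr hsum.symm i)) := by
      simp [b, Module.Basis.reindex_apply]
    set s := finSumFinEquiv.symm (finCongr hsum.symm i) with hs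
    have hcast : ((finCongr hsum.symm i : Fin (r + (n - r))) : ℕ) = (i : ℕ) := rfl
    rcases s with j | j
    · -- i < r
      have hlt : (i : ℕ) < r := by
        have := congrArg (fun x => (finSumFinEquiv x : ℕ)) hs.symm
        simp only [Equiv.apply_symm_apply] at this
        rw [hcast] at this
        simp only [finSumFinEquiv_apply_left, Fin.coe_castAdd] at this
        omega
      have hmem : b0 (Sum.inl j) ∈ p := (hb0l (Sum.inl j)).1 rfl
      obtain ⟨y, hy⟩ := hmem
      rw [hbi, if_pos hlt, one_smul, ← hy]
      exact LinearMap.congr_fun hff y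
    · have hlt : ¬ (i : ℕ) < r := by
        have := congrArg (fun x => (finSumFinEquiv x : ℕ)) hs.symm
        simp only [Equiv.apply_symm_apply] at this
        rw [hcast] at this
        simp only [finSumFinEquiv_apply_right, Fin.coe_natAdd] at this
        omega
      have hmem : b0 (Sum.inr j) ∈ q := (hb0l (Sum.inr j)).2 rfl
      rw [hbi, if_neg hlt, zero_smul]
      exact hmem
  -- the matrix of f in basis b is the diagonal
  have hdiag : LinearMap.toMatrix b b f
      = Matrix.diagonal (fun i : Fin n => if (i : ℕ) < r then (1 : k) else 0) := by
    ext i j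
    rw [LinearMap.toMatrix_apply, hfb j, _root_.map_smul, Module.Basis.repr_self]
    simp only [Finsupp.smul_single, smul_eq_mul, mul_one, Matrix.diagonal_apply]
    rcases eq_or_ne i j with rfl | hne
    · simp
    · simp [Finsupp.single_apply, Ne.symm hne, hne]
  -- change of basis
  let e : Module.Basis (Fin n) k (Fin n → k) := Pi.basisFun k (Fin n)
  have hMe : LinearMap.toMatrix e e f = M := by
    rw [show e = Pi.basisFun k (Fin n) from rfl, LinearMap.toMatrix_eq_toMatrix']
    rw [hfdef, ← Matrix.toLin'_apply', LinearMap.toMatrix'_toLin']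
  have hconj : b.toMatrix e * M * e.toMatrix b = LinearMap.toMatrix b b f := by
    rw [← hMe]
    exact basis_toMatrix_mul_linearMap_toMatrix_mul_basis_toMatrix b e b e f
  refine ⟨⟨b.toMatrix e, e.toMatrix b, Module.Basis.toMatrix_mul_toMatrix_flip _ _,
    Module.Basis.toMatrix_mul_toMatrix_flip _ _⟩, ?_⟩
  rw [← hdiag, ← hconj]
  rfl
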